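/- The function 𝔐 is strictly decreasing on (-∞, 0): if λ₁ < λ₂ < 0 then 𝔐(λ₂) < 𝔐(λ₁). -/

import Mathlib

open MeasureTheory Set

/-- `𝔐(λ) = -(U'(0))² ∫_{-1}^1 U(y)⁻²(φ₁(y,λ)⁻² - 1) dy`, where `φ₁ lam` is the
regular solution of the homogeneous Rayleigh equation at spectral parameter `lam`. -/
noncomputable def Mfrak (U : ℝ → ℝ) (φ₁ : ℝ → ℝ → ℝ) (lam : ℝ) : ℝ :=
  -(deriv U 0) ^ 2 * ∫ y in (-1:ℝ)..1, (((φ₁ lam y) ^ 2)⁻¹ - 1) / (U y) ^ 2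


lemma integral_nonneg_off (g : ℝ → ℝ) (a b c : ℝ) (hab : a ≤ b)
    (h : ∀ x ∈ Set.Icc a b, x ≠ c → 0 ≤ g x) :
    0 ≤ ∫ x in a..b, g x := by
  apply intervalIntegral.integral_nonneg_of_ae_restrict hab
  have hne : ∀ᵐ (x : ℝ) ∂volume, x ≠ c := by
    rw [MeasureTheory.ae_iff]
    simpa using measure_singleton c
  have hc : ∀ᵐ x ∂(volume.restrict (Set.Icc a b)), x ≠ c :=
    MeasureTheory.ae_restrict_of_ae hne
  filter_upwards [hc, MeasureTheory.ae_restrict_mem measurableSet_Icc] with x hx hmem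
  exact h x hmem hx

lemma q_props (V f : ℝ → ℝ) (c₀ L M : ℝ) (hc₀ : 0 < c₀) (hL : 0 < L) (hM : 0 ≤ M)
    (hVc : ContinuousOn V (Icc 0 1))
    (hVlb : ∀ y ∈ Icc (0:ℝ) 1, c₀ * y ≤ V y)
    (hVub : ∀ y ∈ Icc (0:ℝ) 1, V y ≤ L * y)
    (hfc : ContinuousOn f (Icc 0 1))
    (hMb : ∀ y ∈ Icc (0:ℝ) 1, |f y| ≤ M) :
    (∀ y ∈ Icc (0:ℝ) 1, IntervalIntegrable
        (fun w => (∫ z in (0:ℝ)..w, f z * V z ^ 2) / V w ^ 2) volume 0 y) ∧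
    (∀ w ∈ Icc (0:ℝ) 1, |(∫ z in (0:ℝ)..w, f z * V z ^ 2) / V w ^ 2| ≤ M * L ^ 2 / c₀ ^ 2 * w) := by
  set F : ℝ → ℝ := fun w => ∫ z in (0:ℝ)..w, f z * V z ^ 2 with hF
  have hfV : ContinuousOn (fun z => f z * V z ^ 2) (Icc 0 1) := hfc.mul (hVc.pow 2)
  have hFcont : ContinuousOn F (Icc 0 1) := by
    have : ContinuousOn F (uIcc 0 1) := by
      apply intervalIntegral.continuousOn_primitive_interval
      rw [uIcc_of_le (zero_le_one' ℝ)]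
      exact hfV.integrableOn_Icc
    rwa [uIcc_of_le (zero_le_one' ℝ)] at this
  -- bound on F
  have hFb : ∀ w ∈ Icc (0:ℝ) 1, |F w| ≤ M * L ^ 2 * w ^ 2 * w := by
    intro w hw
    have := intervalIntegral.norm_integral_le_of_norm_le_const
      (a := 0) (b := w) (C := M * L ^ 2 * w ^ 2) (f := fun z => f z * V z ^ 2) ?_
    · rw [Real.norm_eq_abs] at this
      calc |F w| ≤ M * L ^ 2 * w ^ 2 * |w - 0| := this
      _ = M * L ^ 2 * w ^ 2 * w := by rw [sub_zero, abs_of_nonneg hw.1]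
    · intro z hz
      rw [uIoc_of_le hw.1] at hz
      have hz1 : z ∈ Icc (0:ℝ) 1 := ⟨le_of_lt hz.1, hz.2.trans hw.2⟩
      have h1 : 0 ≤ V z := le_trans (mul_nonneg hc₀.le hz.1.le) (hVlb z hz1)
      have h2 : V z ≤ L * w := le_trans (hVub z hz1) (by nlinarith [hz.1.le, hz.2])
      rw [Real.norm_eq_abs, abs_mul, abs_pow, sq_abs]
      have : V z ^ 2 ≤ (L * w) ^ 2 := by nlinarith
      calc |f z| * V z ^ 2 ≤ M * (L * w) ^ 2 :=
        mul_le_mul (hMb z hz1) this (by positivity) hM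
      _ = M * L ^ 2 * w ^ 2 := by ring
  have hqb : ∀ w ∈ Icc (0:ℝ) 1, |F w / V w ^ 2| ≤ M * L ^ 2 / c₀ ^ 2 * w := by
    intro w hw
    rcases eq_or_lt_of_le hw.1 with h0 | h0
    · have : F w = 0 := by rw [hF, ← h0]; simp
      rw [this, ← h0]; simp
    · have hVw : c₀ * w ≤ V w := hVlb w hw
      have hVwpos : 0 < V w := lt_of_lt_of_le (by positivity) hVw
      have hden : c₀ ^ 2 * w ^ 2 ≤ V w ^ 2 := by nlinarith [mul_self_le_mul_self (by positivity : (0:ℝ) ≤ c₀ * w) hVw]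
      rw [abs_div, abs_of_nonneg (by positivity : (0:ℝ) ≤ V w ^ 2)]
      have h1 : |F w| / V w ^ 2 ≤ (M * L ^ 2 * w ^ 2 * w) / (c₀ ^ 2 * w ^ 2) :=
        div_le_div₀ (by positivity) (hFb w hw) (by positivity) hden
      calc |F w| / V w ^ 2 ≤ (M * L ^ 2 * w ^ 2 * w) / (c₀ ^ 2 * w ^ 2) := h1
      _ = M * L ^ 2 / c₀ ^ 2 * w := by field_simp
  refine ⟨?_, hqb⟩
  intro y hy
  rw [intervalIntegrable_iff_integrableOn_Ioc_of_le hy.1]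
  have hqcont : ContinuousOn (fun w => F w / V w ^ 2) (Ioc 0 y) := by
    apply ContinuousOn.div
    · exact hFcont.mono (fun x hx => ⟨hx.1.le, hx.2.trans hy.2⟩)
    · exact (hVc.pow 2).mono (fun x hx => ⟨hx.1.le, hx.2.trans hy.2⟩)
    · intro x hx
      have hx1 : x ∈ Icc (0:ℝ) 1 := ⟨hx.1.le, hx.2.trans hy.2⟩
      have : 0 < V x := lt_of_lt_of_le (mul_pos hc₀ hx.1) (hVlb x hx1)
      positivity
  apply MeasureTheory.Integrable.mono'
    (g := fun _ => M * L ^ 2 / c₀ ^ 2)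
    (MeasureTheory.integrableOn_const measure_Ioc_lt_top.ne)
    (hqcont.aestronglyMeasurable measurableSet_Ioc)
  · refine (MeasureTheory.ae_restrict_iff' measurableSet_Ioc).2 (Filter.Eventually.of_forall ?_)
    intro x hx
    have hx1 : x ∈ Icc (0:ℝ) 1 := ⟨hx.1.le, hx.2.trans hy.2⟩
    calc ‖F x / V x ^ 2‖ ≤ M * L ^ 2 / c₀ ^ 2 * x := hqb x hx1
    _ ≤ M * L ^ 2 / c₀ ^ 2 * 1 := by
        apply mul_le_mul_of_nonneg_left hx1.2 (by positivity)
    _ = M * L ^ 2 / c₀ ^ 2 := mul_one _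


section
variable (V f : ℝ → ℝ) (lam c₀ L M : ℝ)

lemma pos_side (hlam : lam < 0) (hc₀ : 0 < c₀) (hL : 0 < L) (hM : 0 ≤ M)
    (hVc : ContinuousOn V (Icc 0 1))
    (hVlb : ∀ y ∈ Icc (0:ℝ) 1, c₀ * y ≤ V y)
    (hVub : ∀ y ∈ Icc (0:ℝ) 1, V y ≤ L * y)
    (hfc : ContinuousOn f (Icc 0 1))
    (hMb : ∀ y ∈ Icc (0:ℝ) 1, |f y| ≤ M)
    (hqint : ∀ y ∈ Icc (0:ℝ) 1, IntervalIntegrable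
        (fun w => (∫ z in (0:ℝ)..w, f z * V z ^ 2) / V w ^ 2) volume 0 y)
    (hqb : ∀ w ∈ Icc (0:ℝ) 1, |(∫ z in (0:ℝ)..w, f z * V z ^ 2) / V w ^ 2| ≤ M * L ^ 2 / c₀ ^ 2 * w)
    (heq : ∀ y ∈ Icc (0:ℝ) 1, f y = 1 - lam * ∫ w in (0:ℝ)..y,
        (∫ z in (0:ℝ)..w, f z * V z ^ 2) / V w ^ 2) :
    (∀ y ∈ Icc (0:ℝ) 1, 1 ≤ f y) ∧
    (∀ y ∈ Icc (0:ℝ) 1, f y ≤ 1 + (-lam) * (M * L ^ 2 / c₀ ^ 2) * y ^ 2) := by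
  set q : ℝ → ℝ := fun w => (∫ z in (0:ℝ)..w, f z * V z ^ 2) / V w ^ 2 with hq
  have hf0 : f 0 = 1 := by
    have := heq 0 (by constructor <;> norm_num)
    simpa using this
  -- positivity of f on [0,1]
  have hfpos : ∀ y ∈ Icc (0:ℝ) 1, 0 < f y := by
    by_contra hcon
    push_neg at hcon
    obtain ⟨y₀, hy₀, hy₀'⟩ := hcon
    set S : Set ℝ := {y ∈ Icc (0:ℝ) 1 | f y ≤ 0} with hS
    have hSc : IsClosed S :=
      hfc.preimage_isClosed_of_isClosed isClosed_Icc isClosed_Iic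
    have hSne : S.Nonempty := ⟨y₀, hy₀, hy₀'⟩
    have hSbdd : BddBelow S := ⟨0, fun t ht => ht.1.1⟩
    set s₀ := sInf S with hs₀
    have hs₀S : s₀ ∈ S := hSc.csInf_mem hSne hSbdd
    have hs₀pos : 0 < s₀ := by
      rcases eq_or_lt_of_le hs₀S.1.1 with h | h
      · exfalso; rw [← h] at hs₀S; have := hs₀S.2; rw [hf0] at this; linarith
      · exact h
    have hflt : ∀ z, 0 ≤ z → z < s₀ → 0 < f z := by
      intro z hz0 hzs
      by_contra hfz
      push_neg at hfz
      have : z ∈ S := ⟨⟨hz0, hzs.le.trans hs₀S.1.2⟩, hfz⟩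
      exact absurd (csInf_le hSbdd this) (not_le.2 hzs)
    have hFnn : ∀ w ∈ Icc (0:ℝ) s₀, 0 ≤ ∫ z in (0:ℝ)..w, f z * V z ^ 2 := by
      intro w hw
      apply integral_nonneg_off _ 0 w s₀ hw.1
      intro z hz hzne
      have hzlt : z < s₀ := lt_of_le_of_ne (hz.2.trans hw.2) hzne
      exact mul_nonneg (hflt z hz.1 hzlt).le (sq_nonneg _)
    have hqnn : ∀ w ∈ Icc (0:ℝ) s₀, 0 ≤ q w := fun w hw =>
      div_nonneg (hFnn w hw) (sq_nonneg _)
    have hint : 0 ≤ ∫ w in (0:ℝ)..s₀, q w :=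
      intervalIntegral.integral_nonneg hs₀pos.le hqnn
    have := heq s₀ hs₀S.1
    have h2 := hs₀S.2
    nlinarith [this, h2, mul_nonneg (neg_nonneg.2 hlam.le) hint]
  -- f ≥ 1
  have hFnn : ∀ w ∈ Icc (0:ℝ) 1, 0 ≤ ∫ z in (0:ℝ)..w, f z * V z ^ 2 := by
    intro w hw
    apply intervalIntegral.integral_nonneg hw.1
    intro z hz
    exact mul_nonneg (hfpos z ⟨hz.1, hz.2.trans hw.2⟩).le (sq_nonneg _)
  have hqnn : ∀ w ∈ Icc (0:ℝ) 1, 0 ≤ q w := fun w hw =>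
    div_nonneg (hFnn w hw) (sq_nonneg _)
  constructor
  · intro y hy
    have hint : 0 ≤ ∫ w in (0:ℝ)..y, q w :=
      intervalIntegral.integral_nonneg hy.1 (fun w hw => hqnn w ⟨hw.1, hw.2.trans hy.2⟩)
    rw [heq y hy]
    nlinarith [mul_nonneg (neg_nonneg.2 hlam.le) hint]
  · intro y hy
    set K := M * L ^ 2 / c₀ ^ 2 with hK
    have hK0 : 0 ≤ K := by positivity
    have hmono : (∫ w in (0:ℝ)..y, q w) ≤ ∫ w in (0:ℝ)..y, K * w := by
      apply intervalIntegral.integral_mono_on hy.1 (hqint y hy)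
        ((continuous_const.mul continuous_id).intervalIntegrable 0 y)
      intro w hw
      exact le_of_abs_le (hqb w ⟨hw.1, hw.2.trans hy.2⟩)
    have hcalc : (∫ w in (0:ℝ)..y, K * w) = K * (y ^ 2 / 2) := by
      rw [intervalIntegral.integral_const_mul, integral_id]
      norm_num
    rw [heq y hy]
    have hIb : (∫ w in (0:ℝ)..y, q w) ≤ K * y ^ 2 := by
      refine hmono.trans ?_
      rw [hcalc]
      nlinarith [sq_nonneg y]
    have h3 : -lam * (∫ w in (0:ℝ)..y, q w) ≤ -lam * (K * y ^ 2) :=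
      mul_le_mul_of_nonneg_left hIb (by linarith)
    nlinarith [h3]
end

lemma pos_comp (V f₁ f₂ : ℝ → ℝ) (lam₁ lam₂ c₀ L : ℝ)
    (h12 : lam₁ < lam₂) (hlam₂ : lam₂ < 0) (hc₀ : 0 < c₀) (hL : 0 < L)
    (hVc : ContinuousOn V (Icc 0 1))
    (hVlb : ∀ y ∈ Icc (0:ℝ) 1, c₀ * y ≤ V y)
    (hVub : ∀ y ∈ Icc (0:ℝ) 1, V y ≤ L * y)
    (hf₁c : ContinuousOn f₁ (Icc 0 1)) (hf₂c : ContinuousOn f₂ (Icc 0 1))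
    (hf₁ge : ∀ y ∈ Icc (0:ℝ) 1, 1 ≤ f₁ y)
    (hq₁int : ∀ y ∈ Icc (0:ℝ) 1, IntervalIntegrable
        (fun w => (∫ z in (0:ℝ)..w, f₁ z * V z ^ 2) / V w ^ 2) volume 0 y)
    (hq₂int : ∀ y ∈ Icc (0:ℝ) 1, IntervalIntegrable
        (fun w => (∫ z in (0:ℝ)..w, f₂ z * V z ^ 2) / V w ^ 2) volume 0 y)
    (heq₁ : ∀ y ∈ Icc (0:ℝ) 1, f₁ y = 1 - lam₁ * ∫ w in (0:ℝ)..y,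
        (∫ z in (0:ℝ)..w, f₁ z * V z ^ 2) / V w ^ 2)
    (heq₂ : ∀ y ∈ Icc (0:ℝ) 1, f₂ y = 1 - lam₂ * ∫ w in (0:ℝ)..y,
        (∫ z in (0:ℝ)..w, f₂ z * V z ^ 2) / V w ^ 2) :
    ∃ B : ℝ, 0 < B ∧ ∀ y ∈ Icc (0:ℝ) 1, B * y ^ 2 ≤ f₁ y - f₂ y := by
  set q₁ : ℝ → ℝ := fun w => (∫ z in (0:ℝ)..w, f₁ z * V z ^ 2) / V w ^ 2 with hq₁def
  set q₂ : ℝ → ℝ := fun w => (∫ z in (0:ℝ)..w, f₂ z * V z ^ 2) / V w ^ 2 with hq₂def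
  set ψ : ℝ → ℝ := fun y => f₁ y - f₂ y with hψdef
  obtain ⟨ε₀, hε₀def⟩ : ∃ e : ℝ, e = (lam₂ - lam₁) / (2 * (-lam₂)) := ⟨_, rfl⟩
  obtain ⟨A₀, hA₀def⟩ : ∃ a : ℝ, a = (lam₂ - lam₁) / 2 := ⟨_, rfl⟩
  obtain ⟨B, hBdef⟩ : ∃ b : ℝ, b = A₀ * c₀ ^ 2 / (3 * L ^ 2) := ⟨_, rfl⟩
  have hA₀pos : 0 < A₀ := by rw [hA₀def]; linarith
  have hε₀pos : 0 < ε₀ := by rw [hε₀def]; exact div_pos (by linarith) (by linarith)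
  have hBpos : 0 < B := by rw [hBdef]; positivity
  have hlam₂ne : lam₂ ≠ 0 := ne_of_lt hlam₂
  have hε₀key : (-lam₂) * ε₀ = A₀ := by
    rw [hε₀def, hA₀def]
    rw [mul_div_assoc']
    rw [div_eq_div_iff (by linarith : (2:ℝ) * -lam₂ ≠ 0) (by norm_num : (2:ℝ) ≠ 0)]
    ring
  have hψc : ContinuousOn ψ (Icc 0 1) := hf₁c.sub hf₂c
  have hVnn : ∀ z ∈ Icc (0:ℝ) 1, 0 ≤ V z := fun z hz =>
    le_trans (mul_nonneg hc₀.le hz.1) (hVlb z hz)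
  have hVpos : ∀ z ∈ Icc (0:ℝ) 1, 0 < z → 0 < V z := fun z hz hz0 =>
    lt_of_lt_of_le (mul_pos hc₀ hz0) (hVlb z hz)
  have hf₁V : ContinuousOn (fun z => f₁ z * V z ^ 2) (Icc 0 1) := hf₁c.mul (hVc.pow 2)
  have hf₂V : ContinuousOn (fun z => f₂ z * V z ^ 2) (Icc 0 1) := hf₂c.mul (hVc.pow 2)
  have hCI : ∀ g : ℝ → ℝ, ContinuousOn g (Icc 0 1) → ∀ w ∈ Icc (0:ℝ) 1,
      IntervalIntegrable g volume 0 w := by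
    intro g hg w hw
    apply ContinuousOn.intervalIntegrable
    rw [uIcc_of_le hw.1]
    exact hg.mono (Icc_subset_Icc le_rfl hw.2)
  -- the combined integrand r = (-lam₁) q₁ + lam₂ q₂
  set r : ℝ → ℝ := fun w => (-lam₁) * q₁ w + lam₂ * q₂ w with hrdef
  have hrint : ∀ y ∈ Icc (0:ℝ) 1, IntervalIntegrable r volume 0 y := fun y hy =>
    ((hq₁int y hy).const_mul _).add ((hq₂int y hy).const_mul _)
  -- identity ψ y = ∫ r
  have hψeq : ∀ y ∈ Icc (0:ℝ) 1, ψ y = ∫ w in (0:ℝ)..y, r w := by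
    intro y hy
    have : (∫ w in (0:ℝ)..y, r w)
        = (-lam₁) * (∫ w in (0:ℝ)..y, q₁ w) + lam₂ * (∫ w in (0:ℝ)..y, q₂ w) := by
      rw [hrdef]
      rw [intervalIntegral.integral_add ((hq₁int y hy).const_mul _) ((hq₂int y hy).const_mul _),
        intervalIntegral.integral_const_mul, intervalIntegral.integral_const_mul]
    rw [this, hψdef]
    have e₁ := heq₁ y hy
    have e₂ := heq₂ y hy
    simp only [] at e₁ e₂ ⊢
    rw [e₁, e₂]; ring
  -- J w, the numerator combination
  have hJrep : ∀ w ∈ Icc (0:ℝ) 1,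
      (-lam₁) * (∫ z in (0:ℝ)..w, f₁ z * V z ^ 2) + lam₂ * (∫ z in (0:ℝ)..w, f₂ z * V z ^ 2)
      = ∫ z in (0:ℝ)..w, ((-lam₁) * f₁ z + lam₂ * f₂ z) * V z ^ 2 := by
    intro w hw
    have h₁ : IntervalIntegrable (fun z => f₁ z * V z ^ 2) volume 0 w := hCI _ hf₁V w hw
    have h₂ : IntervalIntegrable (fun z => f₂ z * V z ^ 2) volume 0 w := hCI _ hf₂V w hw
    rw [← intervalIntegral.integral_const_mul, ← intervalIntegral.integral_const_mul,
      ← intervalIntegral.integral_add (h₁.const_mul _) (h₂.const_mul _)]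
    apply intervalIntegral.integral_congr
    intro z _
    ring
  have hrrep : ∀ w, r w = ((-lam₁) * (∫ z in (0:ℝ)..w, f₁ z * V z ^ 2)
      + lam₂ * (∫ z in (0:ℝ)..w, f₂ z * V z ^ 2)) / V w ^ 2 := by
    intro w
    rw [hrdef, hq₁def, hq₂def]
    simp only []
    rw [← mul_div_assoc, ← mul_div_assoc, ← add_div]
  -- key quantitative bootstrap
  have hkey : ∀ t ∈ Icc (0:ℝ) 1, (∀ y ∈ Icc (0:ℝ) t, y ≠ t → -ε₀ ≤ ψ y) →
      ∀ y ∈ Icc (0:ℝ) t, B / 2 * y ^ 2 ≤ ψ y := by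
    intro t ht hb
    -- lower bound on r on [0, t]
    have hrlb : ∀ w ∈ Icc (0:ℝ) t, B * w ≤ r w := by
      intro w hw
      have hw1 : w ∈ Icc (0:ℝ) 1 := ⟨hw.1, hw.2.trans ht.2⟩
      -- J lower bound
      have hintle : A₀ * (c₀ ^ 2 * w ^ 3 / 3)
          ≤ ∫ z in (0:ℝ)..w, ((-lam₁) * f₁ z + lam₂ * f₂ z) * V z ^ 2 := by
        have hstep1 : 0 ≤ ∫ z in (0:ℝ)..w,
            (((-lam₁) * f₁ z + lam₂ * f₂ z) * V z ^ 2 - A₀ * V z ^ 2) := by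
          apply integral_nonneg_off _ 0 w t hw.1
          intro z hz hzt
          have hz1 : z ∈ Icc (0:ℝ) 1 := ⟨hz.1, (hz.2.trans hw.2).trans ht.2⟩
          have hψz : -ε₀ ≤ ψ z := hb z ⟨hz.1, hz.2.trans hw.2⟩ hzt
          have hf₁z : 1 ≤ f₁ z := hf₁ge z hz1
          have hcoef : A₀ ≤ (-lam₁) * f₁ z + lam₂ * f₂ z := by
            have : (-lam₁) * f₁ z + lam₂ * f₂ z
                = (-lam₂) * ψ z + (lam₂ - lam₁) * f₁ z := by
              rw [hψdef]; ring
            rw [this]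
            have h1 : (-lam₂) * (-ε₀) ≤ (-lam₂) * ψ z :=
              mul_le_mul_of_nonneg_left hψz (by linarith)
            have h2 : (lam₂ - lam₁) * 1 ≤ (lam₂ - lam₁) * f₁ z :=
              mul_le_mul_of_nonneg_left hf₁z (by linarith)
            have h3 : (-lam₂) * (-ε₀) = -A₀ := by rw [← hε₀key]; ring
            rw [hA₀def] at h3 ⊢
            nlinarith [h1, h2, h3]
          have : ((-lam₁) * f₁ z + lam₂ * f₂ z) * V z ^ 2 - A₀ * V z ^ 2
              = (((-lam₁) * f₁ z + lam₂ * f₂ z) - A₀) * V z ^ 2 := by ring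
          rw [this]
          exact mul_nonneg (by linarith) (sq_nonneg _)
        have hsub : (∫ z in (0:ℝ)..w,
            (((-lam₁) * f₁ z + lam₂ * f₂ z) * V z ^ 2 - A₀ * V z ^ 2))
            = (∫ z in (0:ℝ)..w, ((-lam₁) * f₁ z + lam₂ * f₂ z) * V z ^ 2)
              - ∫ z in (0:ℝ)..w, A₀ * V z ^ 2 := by
          apply intervalIntegral.integral_sub
          · exact hCI _ (((continuousOn_const.mul hf₁c).add
              (continuousOn_const.mul hf₂c)).mul (hVc.pow 2)) w hw1
          · exact hCI _ (continuousOn_const.mul (hVc.pow 2)) w hw1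
        have hV2 : A₀ * (c₀ ^ 2 * w ^ 3 / 3) ≤ ∫ z in (0:ℝ)..w, A₀ * V z ^ 2 := by
          have hmono2 : (∫ z in (0:ℝ)..w, c₀ ^ 2 * z ^ 2) ≤ ∫ z in (0:ℝ)..w, V z ^ 2 := by
            apply intervalIntegral.integral_mono_on hw.1
            · exact (continuous_const.mul (continuous_pow 2)).intervalIntegrable 0 w
            · exact hCI _ (hVc.pow 2) w hw1
            · intro z hz
              have hz1 : z ∈ Icc (0:ℝ) 1 := ⟨hz.1, hz.2.trans hw1.2⟩
              have := hVlb z hz1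
              nlinarith [mul_nonneg hc₀.le hz.1]
          have hcomp : (∫ z in (0:ℝ)..w, c₀ ^ 2 * z ^ 2) = c₀ ^ 2 * w ^ 3 / 3 := by
            rw [intervalIntegral.integral_const_mul, integral_pow]
            norm_num
            ring

          rw [intervalIntegral.integral_const_mul]
          calc A₀ * (c₀ ^ 2 * w ^ 3 / 3) = A₀ * (∫ z in (0:ℝ)..w, c₀ ^ 2 * z ^ 2) := by
                rw [hcomp]
          _ ≤ A₀ * ∫ z in (0:ℝ)..w, V z ^ 2 := mul_le_mul_of_nonneg_left hmono2 hA₀pos.le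
        rw [hsub] at hstep1
        linarith [hstep1, hV2]
      -- now divide
      rw [hrrep w]
      rcases eq_or_lt_of_le hw.1 with h0 | h0
      · simp [← h0]
      · have hVw : 0 < V w := hVpos w hw1 h0
        have hVw2 : 0 < V w ^ 2 := by positivity
        have hVub2 : V w ^ 2 ≤ L ^ 2 * w ^ 2 := by
          have h1 := hVub w hw1
          have h2 := hVnn w hw1
          nlinarith
        set Jw := (-lam₁) * (∫ z in (0:ℝ)..w, f₁ z * V z ^ 2)
          + lam₂ * (∫ z in (0:ℝ)..w, f₂ z * V z ^ 2) with hJw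
        have hJnn : 0 ≤ Jw := by
          rw [hJw, hJrep w hw1]
          exact le_trans (by positivity) hintle
        have hd1 : Jw / (L ^ 2 * w ^ 2) ≤ Jw / V w ^ 2 :=
          div_le_div_of_nonneg_left hJnn hVw2 hVub2
        have hd2 : A₀ * (c₀ ^ 2 * w ^ 3 / 3) / (L ^ 2 * w ^ 2) ≤ Jw / (L ^ 2 * w ^ 2) := by
          apply div_le_div_of_nonneg_right ?_ (by positivity : (0:ℝ) ≤ L ^ 2 * w ^ 2)
          rw [hJw, hJrep w hw1]; exact hintle
        have hcalc2 : A₀ * (c₀ ^ 2 * w ^ 3 / 3) / (L ^ 2 * w ^ 2) = B * w := by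
          rw [hBdef]
          field_simp
        rw [hcalc2] at hd2
        linarith [hd1, hd2]
    -- integrate
    intro y hy
    have hy1 : y ∈ Icc (0:ℝ) 1 := ⟨hy.1, hy.2.trans ht.2⟩
    have hmono3 : (∫ w in (0:ℝ)..y, B * w) ≤ ∫ w in (0:ℝ)..y, r w := by
      apply intervalIntegral.integral_mono_on hy.1
        ((continuous_const.mul continuous_id).intervalIntegrable 0 y)
        (hrint y hy1)
      intro w hw
      exact hrlb w ⟨hw.1, hw.2.trans hy.2⟩
    have hcalc3 : (∫ w in (0:ℝ)..y, B * w) = B * (y ^ 2 / 2) := by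
      rw [intervalIntegral.integral_const_mul, integral_id]
      norm_num
    rw [hψeq y hy1]
    calc B / 2 * y ^ 2 = B * (y ^ 2 / 2) := by ring
    _ = ∫ w in (0:ℝ)..y, B * w := hcalc3.symm
    _ ≤ ∫ w in (0:ℝ)..y, r w := hmono3
  -- the continuous induction via sSup
  have hψ0 : ψ 0 = 0 := by
    have e₁ := heq₁ 0 (by constructor <;> norm_num)
    have e₂ := heq₂ 0 (by constructor <;> norm_num)
    simp at e₁ e₂
    rw [hψdef]; simp [e₁, e₂]
  set T : Set ℝ := {t ∈ Icc (0:ℝ) 1 | ∀ y ∈ Icc (0:ℝ) t, -ε₀ ≤ ψ y} with hT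
  have h0T : (0:ℝ) ∈ T := by
    refine ⟨by constructor <;> norm_num, ?_⟩
    intro y hy
    have : y = 0 := le_antisymm hy.2 hy.1
    rw [this, hψ0]; linarith
  have hTbdd : BddAbove T := ⟨1, fun t ht => ht.1.2⟩
  have hTne : T.Nonempty := ⟨0, h0T⟩
  set t₀ := sSup T with ht₀def
  have ht₀0 : 0 ≤ t₀ := le_csSup hTbdd h0T
  have ht₀1 : t₀ ≤ 1 := csSup_le hTne fun t ht => ht.1.2
  have hlt : ∀ y, 0 ≤ y → y < t₀ → -ε₀ ≤ ψ y := by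
    intro y hy0 hyt
    obtain ⟨t, htT, hyt'⟩ := exists_lt_of_lt_csSup hTne hyt
    exact htT.2 y ⟨hy0, hyt'.le⟩
  have hb₀ : ∀ y ∈ Icc (0:ℝ) t₀, y ≠ t₀ → -ε₀ ≤ ψ y := fun y hy hne =>
    hlt y hy.1 (lt_of_le_of_ne hy.2 hne)
  have hψt₀ : ∀ y ∈ Icc (0:ℝ) t₀, B / 2 * y ^ 2 ≤ ψ y :=
    hkey t₀ ⟨ht₀0, ht₀1⟩ hb₀
  have ht₀T : t₀ ∈ T := by
    refine ⟨⟨ht₀0, ht₀1⟩, ?_⟩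
    intro y hy
    have := hψt₀ y hy
    have h9 : (0:ℝ) ≤ B / 2 * y ^ 2 := mul_nonneg (by linarith) (sq_nonneg y)
    exact le_trans (by linarith : -ε₀ ≤ 0) (le_trans h9 this)
  have ht₀eq : t₀ = 1 := by
    by_contra hne
    have ht₀lt : t₀ < 1 := lt_of_le_of_ne ht₀1 hne
    have hψt₀nn : 0 ≤ ψ t₀ := le_trans (mul_nonneg (by linarith : (0:ℝ) ≤ B / 2) (sq_nonneg t₀)) (hψt₀ t₀ ⟨ht₀0, le_rfl⟩)
    have hcwa : ContinuousWithinAt ψ (Icc 0 1) t₀ := hψc.continuousWithinAt ⟨ht₀0, ht₀1⟩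
    have hev : ∀ᶠ y in nhdsWithin t₀ (Icc (0:ℝ) 1), -ε₀ < ψ y := by
      apply hcwa
      apply IsOpen.mem_nhds isOpen_Ioi
      show ψ t₀ ∈ Ioi (-ε₀)
      exact lt_of_lt_of_le (by linarith) hψt₀nn
    rw [Filter.eventually_iff, Metric.mem_nhdsWithin_iff] at hev
    obtain ⟨δ, hδ, hball⟩ := hev
    set t' : ℝ := min 1 (t₀ + δ / 2) with ht'def
    have ht'gt : t₀ < t' := lt_min ht₀lt (by linarith)
    have ht'le1 : t' ≤ 1 := min_le_left _ _
    have ht'T : t' ∈ T := by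
      refine ⟨⟨le_trans ht₀0 ht'gt.le, ht'le1⟩, ?_⟩
      intro y hy
      by_cases hyt₀ : y ≤ t₀
      · exact ht₀T.2 y ⟨hy.1, hyt₀⟩
      · push_neg at hyt₀
        have hy1 : y ∈ Icc (0:ℝ) 1 := ⟨hy.1, hy.2.trans ht'le1⟩
        have hdist : dist y t₀ < δ := by
          rw [Real.dist_eq, abs_of_pos (by linarith)]
          have : y ≤ t₀ + δ / 2 := hy.2.trans (min_le_right _ _)
          linarith
        exact (hball ⟨Metric.mem_ball.2 hdist, hy1⟩).le
    have := le_csSup hTbdd ht'T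
    linarith
  refine ⟨B / 2, by linarith, ?_⟩
  intro y hy
  have := hψt₀ y (by rw [ht₀eq]; exact hy)
  rw [hψdef] at this
  exact this

lemma reflect_eq (U φ : ℝ → ℝ) (lam : ℝ)
    (heq : ∀ y ∈ Icc (-1:ℝ) 1, φ y = 1 - lam * ∫ w in (0:ℝ)..y,
        (∫ z in (0:ℝ)..w, φ z * U z ^ 2) / U w ^ 2) :
    ∀ y ∈ Icc (0:ℝ) 1, (fun t => φ (-t)) y = 1 - lam * ∫ w in (0:ℝ)..y,
        (∫ z in (0:ℝ)..w, (fun t => φ (-t)) z * (fun t => -U (-t)) z ^ 2)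
          / (fun t => -U (-t)) w ^ 2 := by
  intro y hy
  have hy' : -y ∈ Icc (-1:ℝ) 1 := ⟨by linarith [hy.2], by linarith [hy.1]⟩
  simp only []
  -- inner integral transform
  have hinner : ∀ w : ℝ, (∫ z in (0:ℝ)..w, φ (-z) * (-U (-z)) ^ 2)
      = -∫ z in (0:ℝ)..(-w), φ z * U z ^ 2 := by
    intro w
    have : (fun z => φ (-z) * (-U (-z)) ^ 2) = fun z => (fun u => φ u * U u ^ 2) (-z) := by
      funext z; simp [neg_pow]
    rw [this, intervalIntegral.integral_comp_neg (fun u => φ u * U u ^ 2)]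
    rw [neg_zero, intervalIntegral.integral_symm]
  have houter : (∫ w in (0:ℝ)..y,
      (∫ z in (0:ℝ)..w, φ (-z) * (-U (-z)) ^ 2) / (-U (-w)) ^ 2)
      = ∫ w in (0:ℝ)..(-y), (∫ z in (0:ℝ)..w, φ z * U z ^ 2) / U w ^ 2 := by
    have h1 : (fun w => (∫ z in (0:ℝ)..w, φ (-z) * (-U (-z)) ^ 2) / (-U (-w)) ^ 2)
        = fun w => (fun v => -((∫ z in (0:ℝ)..v, φ z * U z ^ 2) / U v ^ 2)) (-w) := by
      funext w
      simp only []
      rw [hinner w, neg_sq, neg_div]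
    rw [h1, intervalIntegral.integral_comp_neg (fun v => -((∫ z in (0:ℝ)..v, φ z * U z ^ 2) / U v ^ 2))]
    rw [neg_zero, intervalIntegral.integral_symm, intervalIntegral.integral_neg, neg_neg]
  rw [heq (-y) hy', houter]

lemma g_bound (U φ : ℝ → ℝ) (c₀ K : ℝ) (hc₀ : 0 < c₀) (hK : 0 ≤ K)
    (hU0 : U 0 = 0)
    (hUlb : ∀ y ∈ Icc (-1:ℝ) 1, c₀ * |y| ≤ |U y|)
    (hge : ∀ y ∈ Icc (-1:ℝ) 1, 1 ≤ φ y)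
    (hub : ∀ y ∈ Icc (-1:ℝ) 1, φ y ≤ 1 + K * y ^ 2) :
    ∀ y ∈ Icc (-1:ℝ) 1, |((φ y ^ 2)⁻¹ - 1) / U y ^ 2| ≤ K * (2 + K) / c₀ ^ 2 := by
  intro y hy
  rcases eq_or_ne y 0 with h0 | h0
  · rw [h0, hU0]
    norm_num
    positivity
  · have ha : 1 ≤ φ y := hge y hy
    have ha2 : 1 ≤ φ y ^ 2 := by nlinarith
    have ha2pos : 0 < φ y ^ 2 := by linarith
    have hnum1 : |(φ y ^ 2)⁻¹ - 1| = 1 - (φ y ^ 2)⁻¹ := by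
      rw [abs_of_nonpos (by simp; exact (inv_le_one_iff₀).2 (Or.inr ha2))]
      ring
    have hnum2 : 1 - (φ y ^ 2)⁻¹ ≤ φ y ^ 2 - 1 := by
      have he : 1 - (φ y ^ 2)⁻¹ = (φ y ^ 2 - 1) / φ y ^ 2 := by
        field_simp
      rw [he]
      exact div_le_self (by linarith) ha2
    have hy2 : y ^ 2 ≤ 1 := by nlinarith [hy.1, hy.2]
    have hnum3 : φ y ^ 2 - 1 ≤ K * (2 + K) * y ^ 2 := by
      have h5 := hub y hy
      nlinarith [sq_nonneg y, mul_nonneg hK (sq_nonneg y), mul_nonneg (mul_nonneg hK hK) (sq_nonneg y), sq_nonneg (y*y)]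
    have hden : c₀ ^ 2 * y ^ 2 ≤ U y ^ 2 := by
      have h1 := hUlb y hy
      have h2 : (c₀ * |y|) ^ 2 ≤ |U y| ^ 2 := by
        have := mul_self_le_mul_self (by positivity : (0:ℝ) ≤ c₀ * |y|) h1
        nlinarith [this]
      rw [sq_abs] at h2
      calc c₀ ^ 2 * y ^ 2 = (c₀ * |y|) ^ 2 := by rw [mul_pow, sq_abs]
      _ ≤ U y ^ 2 := h2
    have hdpos : 0 < c₀ ^ 2 * y ^ 2 := by
      have : y ^ 2 > 0 := by positivity
      positivity
    rw [abs_div, hnum1]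
    have habs2 : |U y ^ 2| = U y ^ 2 := abs_of_nonneg (sq_nonneg _)
    rw [habs2]
    calc (1 - (φ y ^ 2)⁻¹) / U y ^ 2 ≤ (K * (2 + K) * y ^ 2) / (c₀ ^ 2 * y ^ 2) := by
          apply div_le_div₀ (by positivity) (by linarith) hdpos hden
    _ = K * (2 + K) / c₀ ^ 2 := by
        have hyne : y ^ 2 ≠ 0 := pow_ne_zero 2 h0
        field_simp

lemma g_int (U φ : ℝ → ℝ) (c₀ K : ℝ) (hc₀ : 0 < c₀) (hK : 0 ≤ K)
    (hUc : Continuous U) (hU0 : U 0 = 0)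
    (hUlb : ∀ y ∈ Icc (-1:ℝ) 1, c₀ * |y| ≤ |U y|)
    (hφc : ContinuousOn φ (Icc (-1) 1))
    (hge : ∀ y ∈ Icc (-1:ℝ) 1, 1 ≤ φ y)
    (hub : ∀ y ∈ Icc (-1:ℝ) 1, φ y ≤ 1 + K * y ^ 2) :
    IntervalIntegrable (fun y => ((φ y ^ 2)⁻¹ - 1) / U y ^ 2) volume (-1) 1 := by
  have hgb := g_bound U φ c₀ K hc₀ hK hU0 hUlb hge hub
  rw [intervalIntegrable_iff_integrableOn_Ioc_of_le (by norm_num : (-1:ℝ) ≤ 1)]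
  set s' : Set ℝ := Ioc (-1:ℝ) 1 \ {0} with hs'
  have hms' : MeasurableSet s' := measurableSet_Ioc.diff (measurableSet_singleton 0)
  have hsub : s' ⊆ Icc (-1:ℝ) 1 \ {0} :=
    diff_subset_diff_left Ioc_subset_Icc_self
  have hcont : ContinuousOn (fun y => ((φ y ^ 2)⁻¹ - 1) / U y ^ 2) (Icc (-1:ℝ) 1 \ {0}) := by
    apply ContinuousOn.div
    · apply ContinuousOn.sub ?_ continuousOn_const
      apply ContinuousOn.inv₀ ((hφc.mono diff_subset).pow 2)
      intro x hx
      have : 1 ≤ φ x := hge x hx.1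
      exact pow_ne_zero 2 (by linarith)
    · exact (hUc.continuousOn.pow 2)
    · intro x hx
      have hxne : x ≠ 0 := hx.2
      have h1 := hUlb x hx.1
      have : 0 < |U x| := lt_of_lt_of_le (mul_pos hc₀ (abs_pos.2 hxne)) h1
      have : U x ≠ 0 := abs_pos.1 this
      positivity
  have haesm : AEStronglyMeasurable (fun y => ((φ y ^ 2)⁻¹ - 1) / U y ^ 2)
      (volume.restrict (Ioc (-1:ℝ) 1)) := by
    have heqset : s' =ᵐ[volume] Ioc (-1:ℝ) 1 := by
      rw [hs']
      apply MeasureTheory.diff_ae_eq_self.2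
      exact le_antisymm ((measure_mono inter_subset_right).trans
        (by simp)) (by simp)
    rw [← Measure.restrict_congr_set heqset]
    exact (hcont.mono hsub).aestronglyMeasurable hms'
  apply MeasureTheory.Integrable.mono'
    (g := fun _ => K * (2 + K) / c₀ ^ 2)
    (MeasureTheory.integrableOn_const measure_Ioc_lt_top.ne) haesm
  refine (MeasureTheory.ae_restrict_iff' measurableSet_Ioc).2 (Filter.Eventually.of_forall ?_)
  intro x hx
  exact hgb x (Ioc_subset_Icc_self hx)

/-- the function `𝔐` is strictly decreasing on `(-∞,0)`. -/
theorem statement4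
    (U : ℝ → ℝ) (c₀ C : ℝ) (hc₀ : 0 < c₀) (hC : 0 < C)
    (hUreg : ContDiff ℝ 4 U)
    (hU' : ∀ y ∈ Icc (-1:ℝ) 1, c₀ ≤ deriv U y)
    (hU0 : U 0 = 0) (hU''0 : deriv (deriv U) 0 = 0)
    (hUQ : ∀ y ∈ Icc (-1:ℝ) 1, y ≠ 0 →
      -C ≤ deriv (deriv U) y / U y ∧ deriv (deriv U) y / U y ≤ 0)
    (φ₁ : ℝ → ℝ → ℝ)
    (hφ₁ : ∀ lam : ℝ, lam < 0 →
      ContinuousOn (φ₁ lam) (Icc (-1:ℝ) 1) ∧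
      ∀ y ∈ Icc (-1:ℝ) 1, φ₁ lam y = 1 - lam * ∫ w in (0:ℝ)..y,
        (∫ z in (0:ℝ)..w, φ₁ lam z * (U z) ^ 2) / (U w) ^ 2) :
    ∀ lam₁ lam₂ : ℝ, lam₁ < lam₂ → lam₂ < 0 →
      Mfrak U φ₁ lam₂ < Mfrak U φ₁ lam₁ := by
  intro lam₁ lam₂ h12 hlam₂
  have hlam₁ : lam₁ < 0 := h12.trans hlam₂
  -- basic facts about U
  have hUd : Differentiable ℝ U := hUreg.differentiable (by norm_num)
  have hUc : Continuous U := hUd.continuous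
  have hU'c : Continuous (deriv U) := hUreg.continuous_deriv (by norm_num)
  obtain ⟨L₀, hL₀⟩ := (isCompact_Icc (a := (-1:ℝ)) (b := 1)).exists_bound_of_continuousOn
    hU'c.continuousOn
  set L : ℝ := max L₀ 1 with hLdef
  have hL : 0 < L := lt_of_lt_of_le one_pos (le_max_right _ _)
  have hLb : ∀ y ∈ Icc (-1:ℝ) 1, ‖deriv U y‖ ≤ L := fun y hy =>
    (hL₀ y hy).trans (le_max_left _ _)
  -- |U y| ≤ L * |y|
  have hUub : ∀ y ∈ Icc (-1:ℝ) 1, |U y| ≤ L * |y| := by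
    intro y hy
    have := Convex.norm_image_sub_le_of_norm_hasDerivWithin_le
      (f := U) (f' := deriv U) (s := Icc (-1:ℝ) 1)
      (fun x hx => (hUd x).hasDerivAt.hasDerivWithinAt) hLb (convex_Icc _ _)
      (show (0:ℝ) ∈ Icc (-1:ℝ) 1 by constructor <;> norm_num) hy
    simpa [hU0, Real.norm_eq_abs] using this
  -- monotonicity lower bounds
  have hmono : MonotoneOn (fun t => U t - c₀ * t) (Icc (-1:ℝ) 1) := by
    apply monotoneOn_of_deriv_nonneg (convex_Icc _ _)
    · exact (hUc.continuousOn.sub (continuous_const.mul continuous_id).continuousOn)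
    · intro x hx
      exact ((hUd x).sub ((differentiableAt_fun_id).const_mul c₀)).differentiableWithinAt
    · intro x hx
      rw [interior_Icc] at hx
      have hder : deriv (fun t => U t - c₀ * t) x = deriv U x - c₀ := by
        rw [deriv_fun_sub (hUd x) ((differentiableAt_fun_id).const_mul c₀)]
        rw [deriv_const_mul c₀ differentiableAt_fun_id]
        simp
      rw [hder]
      have := hU' x (Ioo_subset_Icc_self hx)
      linarith
  have hUlbp : ∀ y ∈ Icc (0:ℝ) 1, c₀ * y ≤ U y := by
    intro y hy
    have h01 : (0:ℝ) ∈ Icc (-1:ℝ) 1 := by constructor <;> norm_num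
    have hy1 : y ∈ Icc (-1:ℝ) 1 := ⟨by linarith [hy.1], hy.2⟩
    have := hmono h01 hy1 hy.1
    simp only [hU0] at this
    linarith [this]
  have hUlbn : ∀ y ∈ Icc (-1:ℝ) 0, U y ≤ c₀ * y := by
    intro y hy
    have h01 : (0:ℝ) ∈ Icc (-1:ℝ) 1 := by constructor <;> norm_num
    have hy1 : y ∈ Icc (-1:ℝ) 1 := ⟨hy.1, by linarith [hy.2]⟩
    have := hmono hy1 h01 hy.2
    simp only [hU0] at this
    linarith [this]
  have hUabs : ∀ y ∈ Icc (-1:ℝ) 1, c₀ * |y| ≤ |U y| := by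
    intro y hy
    rcases le_or_gt 0 y with h | h
    · have h1 := hUlbp y ⟨h, hy.2⟩
      rw [abs_of_nonneg h, abs_of_nonneg (le_trans (mul_nonneg hc₀.le h) h1)]
      exact h1
    · have h1 := hUlbn y ⟨hy.1, h.le⟩
      have h2 : U y < 0 := lt_of_le_of_lt h1 (by nlinarith)
      rw [abs_of_neg h, abs_of_neg h2]
      nlinarith
  -- bounds for V := U on [0,1]
  have hVubp : ∀ y ∈ Icc (0:ℝ) 1, U y ≤ L * y := by
    intro y hy
    have hy1 : y ∈ Icc (-1:ℝ) 1 := ⟨by linarith [hy.1], hy.2⟩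
    have := hUub y hy1
    rw [abs_of_nonneg hy.1] at this
    exact (le_abs_self _).trans this
  -- reflected V
  set Vr : ℝ → ℝ := fun t => -U (-t) with hVrdef
  have hVrc : ContinuousOn Vr (Icc 0 1) := (hUc.comp continuous_neg).neg.continuousOn
  have hVrlb : ∀ y ∈ Icc (0:ℝ) 1, c₀ * y ≤ Vr y := by
    intro y hy
    have : -y ∈ Icc (-1:ℝ) 0 := ⟨by linarith [hy.2], by linarith [hy.1]⟩
    have := hUlbn (-y) this
    simp only [hVrdef]
    nlinarith [this]
  have hVrub : ∀ y ∈ Icc (0:ℝ) 1, Vr y ≤ L * y := by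
    intro y hy
    have hy1 : -y ∈ Icc (-1:ℝ) 1 := ⟨by linarith [hy.2], by linarith [hy.1]⟩
    have := hUub (-y) hy1
    rw [abs_neg, abs_of_nonneg hy.1] at this
    simp only [hVrdef]
    have h2 : -U (-y) ≤ |U (-y)| := neg_le_abs _
    linarith
  have hUcOn : ContinuousOn U (Icc 0 1) := hUc.continuousOn
  -- per-lambda analysis
  have main : ∀ lam : ℝ, lam < 0 → ∃ K : ℝ, 0 ≤ K ∧
      (∀ y ∈ Icc (-1:ℝ) 1, 1 ≤ φ₁ lam y) ∧
      (∀ y ∈ Icc (-1:ℝ) 1, φ₁ lam y ≤ 1 + K * y ^ 2) := by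
    intro lam hlam
    obtain ⟨hφc, heq⟩ := hφ₁ lam hlam
    obtain ⟨M₀, hM₀⟩ := isCompact_Icc.exists_bound_of_continuousOn hφc
    set M : ℝ := max M₀ 0 with hMdef
    have hM : 0 ≤ M := le_max_right _ _
    have hMb : ∀ y ∈ Icc (-1:ℝ) 1, |φ₁ lam y| ≤ M := fun y hy =>
      (hM₀ y hy).trans (le_max_left _ _)
    -- positive side
    have hφcp : ContinuousOn (φ₁ lam) (Icc 0 1) :=
      hφc.mono (fun x hx => ⟨by linarith [hx.1], hx.2⟩)
    have hMbp : ∀ y ∈ Icc (0:ℝ) 1, |φ₁ lam y| ≤ M := fun y hy =>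
      hMb y ⟨by linarith [hy.1], hy.2⟩
    have heqp : ∀ y ∈ Icc (0:ℝ) 1, φ₁ lam y = 1 - lam * ∫ w in (0:ℝ)..y,
        (∫ z in (0:ℝ)..w, φ₁ lam z * U z ^ 2) / U w ^ 2 := fun y hy =>
      heq y ⟨by linarith [hy.1], hy.2⟩
    obtain ⟨hqint, hqb⟩ := q_props U (φ₁ lam) c₀ L M hc₀ hL hM hUcOn hUlbp hVubp hφcp hMbp
    obtain ⟨hgep, hubp⟩ := pos_side U (φ₁ lam) lam c₀ L M hlam hc₀ hL hM hUcOn hUlbp hVubp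
      hφcp hMbp hqint hqb heqp
    -- reflected side
    set φr : ℝ → ℝ := fun t => φ₁ lam (-t) with hφrdef
    have hφrc : ContinuousOn φr (Icc 0 1) := by
      apply hφc.comp continuous_neg.continuousOn
      intro x hx
      exact ⟨by simp; linarith [hx.2], by simp; linarith [hx.1]⟩
    have hMbr : ∀ y ∈ Icc (0:ℝ) 1, |φr y| ≤ M := by
      intro y hy
      exact hMb (-y) ⟨by linarith [hy.2], by linarith [hy.1]⟩
    have heqr := reflect_eq U (φ₁ lam) lam heq
    obtain ⟨hqintr, hqbr⟩ := q_props Vr φr c₀ L M hc₀ hL hM hVrc hVrlb hVrub hφrc hMbr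
    obtain ⟨hger, hubr⟩ := pos_side Vr φr lam c₀ L M hlam hc₀ hL hM hVrc hVrlb hVrub
      hφrc hMbr hqintr hqbr heqr
    refine ⟨(-lam) * (M * L ^ 2 / c₀ ^ 2), mul_nonneg (by linarith) (by positivity), ?_, ?_⟩
    · intro y hy
      rcases le_or_gt 0 y with h | h
      · exact hgep y ⟨h, hy.2⟩
      · have := hger (-y) ⟨by linarith, by linarith [hy.1]⟩
        simp only [hφrdef, neg_neg] at this
        exact this
    · intro y hy
      rcases le_or_gt 0 y with h | h
      · exact hubp y ⟨h, hy.2⟩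
      · have := hubr (-y) ⟨by linarith, by linarith [hy.1]⟩
        simp only [hφrdef, neg_neg] at this
        calc φ₁ lam y ≤ 1 + (-lam) * (M * L ^ 2 / c₀ ^ 2) * (-y) ^ 2 := this
        _ = 1 + (-lam) * (M * L ^ 2 / c₀ ^ 2) * y ^ 2 := by ring
  obtain ⟨K₁, hK₁, hge₁, hub₁⟩ := main lam₁ hlam₁
  obtain ⟨K₂, hK₂, hge₂, hub₂⟩ := main lam₂ hlam₂
  -- comparison
  obtain ⟨hφc₁, heq₁⟩ := hφ₁ lam₁ hlam₁
  obtain ⟨hφc₂, heq₂⟩ := hφ₁ lam₂ hlam₂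
  have hcomp : (∀ y ∈ Icc (-1:ℝ) 1, φ₁ lam₂ y ≤ φ₁ lam₁ y) ∧
      ∃ B : ℝ, 0 < B ∧ ∀ y ∈ Icc (0:ℝ) 1, B * y ^ 2 ≤ φ₁ lam₁ y - φ₁ lam₂ y := by
    have sub01 : Icc (0:ℝ) 1 ⊆ Icc (-1:ℝ) 1 := fun x hx => ⟨by linarith [hx.1], hx.2⟩
    obtain ⟨M₀₁, hM₀₁⟩ := isCompact_Icc.exists_bound_of_continuousOn hφc₁
    obtain ⟨M₀₂, hM₀₂⟩ := isCompact_Icc.exists_bound_of_continuousOn hφc₂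
    set M : ℝ := max (max M₀₁ M₀₂) 0 with hMdef
    have hM : 0 ≤ M := le_max_right _ _
    have hMb₁ : ∀ y ∈ Icc (-1:ℝ) 1, |φ₁ lam₁ y| ≤ M := fun y hy =>
      (hM₀₁ y hy).trans ((le_max_left _ _).trans (le_max_left _ _))
    have hMb₂ : ∀ y ∈ Icc (-1:ℝ) 1, |φ₁ lam₂ y| ≤ M := fun y hy =>
      (hM₀₂ y hy).trans ((le_max_right _ _).trans (le_max_left _ _))
    obtain ⟨hq₁int, _⟩ := q_props U (φ₁ lam₁) c₀ L M hc₀ hL hM hUcOn hUlbp hVubp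
      (hφc₁.mono sub01) (fun y hy => hMb₁ y (sub01 hy))
    obtain ⟨hq₂int, _⟩ := q_props U (φ₁ lam₂) c₀ L M hc₀ hL hM hUcOn hUlbp hVubp
      (hφc₂.mono sub01) (fun y hy => hMb₂ y (sub01 hy))
    have heq₁p : ∀ y ∈ Icc (0:ℝ) 1, φ₁ lam₁ y = 1 - lam₁ * ∫ w in (0:ℝ)..y,
        (∫ z in (0:ℝ)..w, φ₁ lam₁ z * U z ^ 2) / U w ^ 2 := fun y hy => heq₁ y (sub01 hy)
    have heq₂p : ∀ y ∈ Icc (0:ℝ) 1, φ₁ lam₂ y = 1 - lam₂ * ∫ w in (0:ℝ)..y,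
        (∫ z in (0:ℝ)..w, φ₁ lam₂ z * U z ^ 2) / U w ^ 2 := fun y hy => heq₂ y (sub01 hy)
    obtain ⟨B, hBpos, hBle⟩ := pos_comp U (φ₁ lam₁) (φ₁ lam₂) lam₁ lam₂ c₀ L h12 hlam₂ hc₀ hL
      hUcOn hUlbp hVubp (hφc₁.mono sub01) (hφc₂.mono sub01)
      (fun y hy => hge₁ y (sub01 hy)) hq₁int hq₂int heq₁p heq₂p
    -- reflected comparison
    set φr₁ : ℝ → ℝ := fun t => φ₁ lam₁ (-t) with hφr₁def
    set φr₂ : ℝ → ℝ := fun t => φ₁ lam₂ (-t) with hφr₂def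
    have hmaps : MapsTo (fun t : ℝ => -t) (Icc (0:ℝ) 1) (Icc (-1:ℝ) 1) := by
      intro x hx
      exact ⟨by simp; linarith [hx.2], by simp; linarith [hx.1]⟩
    have hφr₁c : ContinuousOn φr₁ (Icc 0 1) := hφc₁.comp continuous_neg.continuousOn hmaps
    have hφr₂c : ContinuousOn φr₂ (Icc 0 1) := hφc₂.comp continuous_neg.continuousOn hmaps
    obtain ⟨hqr₁int, _⟩ := q_props Vr φr₁ c₀ L M hc₀ hL hM hVrc hVrlb hVrub hφr₁c
      (fun y hy => hMb₁ (-y) (hmaps hy))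
    obtain ⟨hqr₂int, _⟩ := q_props Vr φr₂ c₀ L M hc₀ hL hM hVrc hVrlb hVrub hφr₂c
      (fun y hy => hMb₂ (-y) (hmaps hy))
    have heqr₁ := reflect_eq U (φ₁ lam₁) lam₁ heq₁
    have heqr₂ := reflect_eq U (φ₁ lam₂) lam₂ heq₂
    have hger₁ : ∀ y ∈ Icc (0:ℝ) 1, 1 ≤ φr₁ y := fun y hy => hge₁ (-y) (hmaps hy)
    obtain ⟨B', hB'pos, hB'le⟩ := pos_comp Vr φr₁ φr₂ lam₁ lam₂ c₀ L h12 hlam₂ hc₀ hL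
      hVrc hVrlb hVrub hφr₁c hφr₂c hger₁ hqr₁int hqr₂int heqr₁ heqr₂
    constructor
    · intro y hy
      rcases le_or_gt 0 y with h | h
      · have := hBle y ⟨h, hy.2⟩
        nlinarith [mul_nonneg hBpos.le (sq_nonneg y)]
      · have := hB'le (-y) ⟨by linarith, by linarith [hy.1]⟩
        simp only [hφr₁def, hφr₂def, neg_neg] at this
        nlinarith [mul_nonneg hB'pos.le (sq_nonneg (-y))]
    · exact ⟨B, hBpos, hBle⟩
  obtain ⟨hle, B, hBpos, hBle⟩ := hcomp
  -- integrability
  have hgi₁ := g_int U (φ₁ lam₁) c₀ K₁ hc₀ hK₁ hUc hU0 hUabs hφc₁ hge₁ hub₁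
  have hgi₂ := g_int U (φ₁ lam₂) c₀ K₂ hc₀ hK₂ hUc hU0 hUabs hφc₂ hge₂ hub₂
  -- the difference of integrands
  set D : ℝ → ℝ := fun y => ((φ₁ lam₂ y ^ 2)⁻¹ - 1) / U y ^ 2
    - ((φ₁ lam₁ y ^ 2)⁻¹ - 1) / U y ^ 2 with hDdef
  have hDrep : ∀ y, D y = ((φ₁ lam₂ y ^ 2)⁻¹ - (φ₁ lam₁ y ^ 2)⁻¹) / U y ^ 2 := by
    intro y
    show ((φ₁ lam₂ y ^ 2)⁻¹ - 1) / U y ^ 2 - ((φ₁ lam₁ y ^ 2)⁻¹ - 1) / U y ^ 2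
      = ((φ₁ lam₂ y ^ 2)⁻¹ - (φ₁ lam₁ y ^ 2)⁻¹) / U y ^ 2
    rw [div_sub_div_same]
    congr 1
    ring
  have hDnn : ∀ y ∈ Icc (-1:ℝ) 1, 0 ≤ D y := by
    intro y hy
    rw [hDrep y]
    apply div_nonneg ?_ (sq_nonneg _)
    have h1 : 1 ≤ φ₁ lam₂ y := hge₂ y hy
    have h2 : φ₁ lam₂ y ≤ φ₁ lam₁ y := hle y hy
    have h3 : 0 < φ₁ lam₂ y ^ 2 := by positivity
    have h4 : φ₁ lam₂ y ^ 2 ≤ φ₁ lam₁ y ^ 2 := by nlinarith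
    have := inv_anti₀ h3 h4
    linarith
  have hDpos : ∀ x ∈ Ioo (1/2 : ℝ) 1, 0 < D x := by
    intro x hx
    rw [hDrep x]
    have hx1 : x ∈ Icc (-1:ℝ) 1 := ⟨by linarith [hx.1], hx.2.le⟩
    have hx0 : x ∈ Icc (0:ℝ) 1 := ⟨by linarith [hx.1], hx.2.le⟩
    have h1 : 1 ≤ φ₁ lam₂ x := hge₂ x hx1
    have hdiff : B * x ^ 2 ≤ φ₁ lam₁ x - φ₁ lam₂ x := hBle x hx0
    have hx2 : 0 < x ^ 2 := by nlinarith [hx.1]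
    have h2 : φ₁ lam₂ x < φ₁ lam₁ x := by nlinarith [mul_pos hBpos hx2]
    have h3 : 0 < φ₁ lam₂ x ^ 2 := by positivity
    have h4 : φ₁ lam₂ x ^ 2 < φ₁ lam₁ x ^ 2 := by nlinarith
    have h5 := inv_strictAnti₀ h3 h4
    have h6 : 0 < U x := lt_of_lt_of_le (mul_pos hc₀ (by linarith [hx.1])) (hUlbp x hx0)
    have h7 : 0 < U x ^ 2 := by positivity
    apply div_pos (by linarith) h7
  -- integral comparison
  have hint12 : (∫ y in (-1:ℝ)..1, ((φ₁ lam₁ y ^ 2)⁻¹ - 1) / U y ^ 2)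
      < ∫ y in (-1:ℝ)..1, ((φ₁ lam₂ y ^ 2)⁻¹ - 1) / U y ^ 2 := by
    have hDint : IntervalIntegrable D volume (-1) 1 := hgi₂.sub hgi₁
    have hD1 : IntervalIntegrable D volume (-1) (1/2) := by
      apply hDint.mono_set
      rw [uIcc_of_le (by norm_num : (-1:ℝ) ≤ 1/2), uIcc_of_le (by norm_num : (-1:ℝ) ≤ 1)]
      exact Icc_subset_Icc le_rfl (by norm_num)
    have hD2 : IntervalIntegrable D volume (1/2) 1 := by
      apply hDint.mono_set
      rw [uIcc_of_le (by norm_num : (1/2:ℝ) ≤ 1), uIcc_of_le (by norm_num : (-1:ℝ) ≤ 1)]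
      exact Icc_subset_Icc (by norm_num) le_rfl
    have hsplit : (∫ y in (-1:ℝ)..1, D y)
        = (∫ y in (-1:ℝ)..(1/2), D y) + ∫ y in (1/2:ℝ)..1, D y :=
      (intervalIntegral.integral_add_adjacent_intervals hD1 hD2).symm
    have hpart1 : 0 ≤ ∫ y in (-1:ℝ)..(1/2), D y :=
      intervalIntegral.integral_nonneg (by norm_num)
        (fun u hu => hDnn u ⟨hu.1, hu.2.trans (by norm_num)⟩)
    have hpart2 : 0 < ∫ y in (1/2:ℝ)..1, D y :=
      intervalIntegral.intervalIntegral_pos_of_pos_on hD2 hDpos (by norm_num)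
    have hDI : 0 < ∫ y in (-1:ℝ)..1, D y := by rw [hsplit]; linarith
    have hsub := intervalIntegral.integral_sub hgi₂ hgi₁
    have h0 : (0:ℝ) < (∫ y in (-1:ℝ)..1, ((φ₁ lam₂ y ^ 2)⁻¹ - 1) / U y ^ 2)
        - ∫ y in (-1:ℝ)..1, ((φ₁ lam₁ y ^ 2)⁻¹ - 1) / U y ^ 2 := by
      rw [← hsub]
      exact hDI
    linarith [h0]
  -- conclude
  have hd0 : c₀ ≤ deriv U 0 := hU' 0 (by constructor <;> norm_num)
  have hc : 0 < (deriv U 0) ^ 2 := pow_pos (lt_of_lt_of_le hc₀ hd0) 2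
  show Mfrak U φ₁ lam₂ < Mfrak U φ₁ lam₁
  unfold Mfrak
  have := mul_lt_mul_of_pos_left hint12 hc
  linarith [this]
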